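/- arXiv:math/0001008 — 5 statements merged into one kernel-verified Lean document; each statement's English description precedes it below -/
import Mathlib

section
/- The function Θ(w,z,x,y) = σ/(wx+zy), defined on the open set where wx+zy ≠ 0, satisfies the second heavenly equation Θ_{xw} + Θ_{yz} + Θ_{xx}Θ_{yy} − (Θ_{xy})² = 0, for any constant σ. -/
/-- Partial derivative with respect to the first variable `w`. -/
noncomputable def pw (f : ℂ → ℂ → ℂ → ℂ → ℂ) : ℂ → ℂ → ℂ → ℂ → ℂ :=
  fun w z x y => deriv (fun t => f t z x y) w

/-- Partial derivative with respect to the second variable `z`. -/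
noncomputable def pz (f : ℂ → ℂ → ℂ → ℂ → ℂ) : ℂ → ℂ → ℂ → ℂ → ℂ :=
  fun w z x y => deriv (fun t => f w t x y) z

/-- Partial derivative with respect to the third variable `x`. -/
noncomputable def px (f : ℂ → ℂ → ℂ → ℂ → ℂ) : ℂ → ℂ → ℂ → ℂ → ℂ :=
  fun w z x y => deriv (fun t => f w z t y) x

/-- Partial derivative with respect to the fourth variable `y`. -/
noncomputable def py (f : ℂ → ℂ → ℂ → ℂ → ℂ) : ℂ → ℂ → ℂ → ℂ → ℂ :=
  fun w z x y => deriv (fun t => f w z x t) y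

/-- The Sparling–Tod potential Θ = σ/(wx+zy). -/
noncomputable def STpot (σ : ℂ) : ℂ → ℂ → ℂ → ℂ → ℂ :=
  fun w z x y => σ / (w * x + z * y)


lemma hasDerivAt_div_lin (σ a b s : ℂ) (h : a*s+b ≠ 0) :
    HasDerivAt (fun t => σ/(a*t+b)) (-(σ*a)/(a*s+b)^2) s := by
  have h1 : HasDerivAt (fun t : ℂ => a*t+b) a s := by
    simpa using ((hasDerivAt_id s).const_mul a).add_const b
  have := (hasDerivAt_const s σ).div h1 h
  simp only [Pi.div_def, Pi.pow_def, Pi.pow_apply] at this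
  refine this.congr_deriv ?_
  ring

lemma hasDerivAt_lin_div_sq (c a b s : ℂ) (h : a*s+b ≠ 0) :
    HasDerivAt (fun t => c*t/(a*t+b)^2) ((c*(a*s+b)-2*c*s*a)/(a*s+b)^3) s := by
  have h1 : HasDerivAt (fun t : ℂ => a*t+b) a s := by
    simpa using ((hasDerivAt_id s).const_mul a).add_const b
  have h2 := h1.pow 2
  have h3 : HasDerivAt (fun t : ℂ => c*t) c s := by
    simpa using (hasDerivAt_id s).const_mul c
  have := h3.div h2 (by simpa using pow_ne_zero 2 h)
  simp only [Pi.div_def, Pi.pow_def, Pi.pow_apply] at this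
  refine this.congr_deriv ?_
  push_cast
  field_simp

lemma hasDerivAt_const_div_sq (c a b s : ℂ) (h : a*s+b ≠ 0) :
    HasDerivAt (fun t => c/(a*t+b)^2) (-(2*c*a)/(a*s+b)^3) s := by
  have h1 : HasDerivAt (fun t : ℂ => a*t+b) a s := by
    simpa using ((hasDerivAt_id s).const_mul a).add_const b
  have h2 := h1.pow 2
  have := (hasDerivAt_const s c).div h2 (by simpa using pow_ne_zero 2 h)
  simp only [Pi.div_def, Pi.pow_def, Pi.pow_apply] at this
  refine this.congr_deriv ?_
  push_cast
  field_simp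
  ring

lemma eventually_ne_lin (a b x : ℂ) (h : a*x+b ≠ 0) : ∀ᶠ t in nhds x, a*t+b ≠ 0 := by
  have hc : ContinuousAt (fun t : ℂ => a*t+b) x := by fun_prop
  exact hc.eventually_ne h

/-- Θ = σ/(wx+zy) satisfies the second heavenly equation
Θ_{xw} + Θ_{yz} + Θ_{xx}Θ_{yy} − (Θ_{xy})² = 0 where wx+zy ≠ 0. -/
theorem sparlingTod_solves_second_heavenly (σ : ℂ) (w z x y : ℂ)
    (h : w * x + z * y ≠ 0) :
    px (pw (STpot σ)) w z x y + py (pz (STpot σ)) w z x y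
      + px (px (STpot σ)) w z x y * py (py (STpot σ)) w z x y
      - (px (py (STpot σ)) w z x y) ^ 2 = 0 := by
  have hx : w*x+z*y ≠ 0 := h
  have hy : z*y+w*x ≠ 0 := by rwa [add_comm] at h
  -- Term 1 : Θ_{xw}
  have E1 : px (pw (STpot σ)) w z x y
      = ((-σ)*(w*x+z*y)-2*(-σ)*x*w)/(w*x+z*y)^3 := by
    have hev : (fun t => pw (STpot σ) w z t y)
        =ᶠ[nhds x] (fun t => (-σ)*t/(w*t+z*y)^2) := by
      filter_upwards [eventually_ne_lin w (z*y) x hx] with t ht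
      have hfun : (fun s : ℂ => STpot σ s z t y) = (fun s => σ/(t*s+z*y)) := by
        funext s; simp [STpot]; ring_nf
      have ht' : t*w+z*y ≠ 0 := by rwa [mul_comm] at ht
      rw [pw, hfun, (hasDerivAt_div_lin σ t (z*y) w ht').deriv]
      rw [mul_comm t w]; ring
    rw [px, hev.deriv_eq, (hasDerivAt_lin_div_sq (-σ) w (z*y) x hx).deriv]
  -- Term 2 : Θ_{yz}
  have E2 : py (pz (STpot σ)) w z x y
      = ((-σ)*(z*y+w*x)-2*(-σ)*y*z)/(z*y+w*x)^3 := by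
    have hev : (fun t => pz (STpot σ) w z x t)
        =ᶠ[nhds y] (fun t => (-σ)*t/(z*t+w*x)^2) := by
      filter_upwards [eventually_ne_lin z (w*x) y hy] with t ht
      have hfun : (fun s : ℂ => STpot σ w s x t) = (fun s => σ/(t*s+w*x)) := by
        funext s; simp [STpot]; ring_nf
      have ht' : t*z+w*x ≠ 0 := by rwa [mul_comm] at ht
      rw [pz, hfun, (hasDerivAt_div_lin σ t (w*x) z ht').deriv]
      rw [mul_comm t z]; ring
    rw [py, hev.deriv_eq, (hasDerivAt_lin_div_sq (-σ) z (w*x) y hy).deriv]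
  -- Term 3 : Θ_{xx}
  have E3 : px (px (STpot σ)) w z x y
      = -(2*((-σ)*w)*w)/(w*x+z*y)^3 := by
    have hev : (fun t => px (STpot σ) w z t y)
        =ᶠ[nhds x] (fun t => ((-σ)*w)/(w*t+z*y)^2) := by
      filter_upwards [eventually_ne_lin w (z*y) x hx] with t ht
      have hfun : (fun s : ℂ => STpot σ w z s y) = (fun s => σ/(w*s+z*y)) := by
        funext s; simp [STpot]
      rw [px, hfun, (hasDerivAt_div_lin σ w (z*y) t ht).deriv]
      ring
    rw [px, hev.deriv_eq, (hasDerivAt_const_div_sq ((-σ)*w) w (z*y) x hx).deriv]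
  -- Term 4 : Θ_{yy}
  have E4 : py (py (STpot σ)) w z x y
      = -(2*((-σ)*z)*z)/(z*y+w*x)^3 := by
    have hev : (fun t => py (STpot σ) w z x t)
        =ᶠ[nhds y] (fun t => ((-σ)*z)/(z*t+w*x)^2) := by
      filter_upwards [eventually_ne_lin z (w*x) y hy] with t ht
      have hfun : (fun s : ℂ => STpot σ w z x s) = (fun s => σ/(z*s+w*x)) := by
        funext s; simp [STpot]; ring_nf
      rw [py, hfun, (hasDerivAt_div_lin σ z (w*x) t ht).deriv]
      ring
    rw [py, hev.deriv_eq, (hasDerivAt_const_div_sq ((-σ)*z) z (w*x) y hy).deriv]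
  -- Term 5 : Θ_{xy}
  have E5 : px (py (STpot σ)) w z x y
      = -(2*((-σ)*z)*w)/(w*x+z*y)^3 := by
    have hev : (fun t => py (STpot σ) w z t y)
        =ᶠ[nhds x] (fun t => ((-σ)*z)/(w*t+z*y)^2) := by
      filter_upwards [eventually_ne_lin w (z*y) x hx] with t ht
      have hfun : (fun s : ℂ => STpot σ w z t s) = (fun s => σ/(z*s+w*t)) := by
        funext s; simp [STpot]; ring_nf
      have ht' : z*y+w*t ≠ 0 := by rwa [add_comm] at ht
      rw [py, hfun, (hasDerivAt_div_lin σ z (w*t) y ht').deriv]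
      rw [add_comm (z*y) (w*t)]; ring
    rw [px, hev.deriv_eq, (hasDerivAt_const_div_sq ((-σ)*z) w (z*y) x hx).deriv]
  rw [E1, E2, E3, E4, E5]
  rw [add_comm (z*y) (w*x)]
  field_simp
  ring
end

section
/- For every natural number n, the function φ_n(w,z,x,y) = (−y/w)^n · 1/(wx+zy) satisfies the flat ultrahyperbolic wave equation φ_{xw} + φ_{yz} = 0 on the region where w ≠ 0 and wx+zy ≠ 0. -/
/-- φ_n(w,z,x,y) = (−y/w)^n / (wx+zy). -/
noncomputable def phiSeq (n : ℕ) : ℂ → ℂ → ℂ → ℂ → ℂ :=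
  fun w z x y => (-y / w) ^ n * (1 / (w * x + z * y))

private lemma hasDerivAt_phi_w (n : ℕ) (w z x y : ℂ) (hw : w ≠ 0) (h : w*x+z*y ≠ 0) :
    HasDerivAt (fun t => phiSeq n t z x y)
      ((↑n * (-y/w)^(n-1) * (y/w^2)) * (w*x+z*y)⁻¹
        + (-y/w)^n * (-(1*x) / (w*x+z*y)^2)) w := by
  have h1 : HasDerivAt (fun t : ℂ => (-y/t)^n) (↑n * (-y/w)^(n-1) * (y/w^2)) w := by
    have h0 : HasDerivAt (fun t : ℂ => -y/t) (y/w^2) w := by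
      have h0' := (hasDerivAt_inv hw).const_mul (-y)
      have e1 : (fun t : ℂ => -y * t⁻¹) = fun t : ℂ => -y/t := by funext t; ring
      have e2 : -y * -(w^2)⁻¹ = y/w^2 := by field_simp
      rw [e1, e2] at h0'; exact h0'
    exact h0.pow n
  have h2 : HasDerivAt (fun t : ℂ => (t*x+z*y)⁻¹) (-(1*x)/(w*x+z*y)^2) w :=
    (((hasDerivAt_id w).mul_const x).add_const (z*y)).inv h
  simpa [phiSeq, one_div] using h1.fun_mul h2

private lemma pw_phi (n : ℕ) (w z x y : ℂ) (hw : w ≠ 0) (h : w*x+z*y ≠ 0) :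
    pw (phiSeq n) w z x y =
      (↑n * (-y/w)^(n-1) * (y/w^2)) * (w*x+z*y)⁻¹
        + (-y/w)^n * (-(1*x) / (w*x+z*y)^2) :=
  (hasDerivAt_phi_w n w z x y hw h).deriv

private lemma hasDerivAt_phi_z (n : ℕ) (w z x y : ℂ) (h : w*x+z*y ≠ 0) :
    HasDerivAt (fun t => phiSeq n w t x y)
      ((-y/w)^n * (-(1*y) / (w*x+z*y)^2)) z := by
  have h2 : HasDerivAt (fun t : ℂ => (w*x+t*y)⁻¹) (-(1*y)/(w*x+z*y)^2) z :=
    (((hasDerivAt_id z).mul_const y).const_add (w*x)).inv h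
  simpa [phiSeq, one_div] using h2.const_mul ((-y/w)^n)

private lemma pz_phi (n : ℕ) (w z x y : ℂ) (h : w*x+z*y ≠ 0) :
    pz (phiSeq n) w z x y = (-y/w)^n * (-(1*y) / (w*x+z*y)^2) :=
  (hasDerivAt_phi_z n w z x y h).deriv

/-- Each φ_n = (−y/w)^n/(wx+zy) satisfies the flat wave equation
φ_{xw} + φ_{yz} = 0 on the region {w ≠ 0, wx+zy ≠ 0}. -/
theorem phiSeq_solves_flat_wave (n : ℕ) (w z x y : ℂ)
    (hw : w ≠ 0) (h : w * x + z * y ≠ 0) :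
    px (pw (phiSeq n)) w z x y + py (pz (phiSeq n)) w z x y = 0 := by
  have A := w*x+z*y
  -- px (pw φ)
  have hcx : ContinuousAt (fun t : ℂ => w*t+z*y) x := by fun_prop
  have hex : ∀ᶠ t in nhds x, w*t+z*y ≠ 0 := hcx.eventually_ne h
  have heq1 : (fun t => pw (phiSeq n) w z t y) =ᶠ[nhds x]
      (fun t => (↑n * (-y/w)^(n-1) * (y/w^2)) * (w*t+z*y)⁻¹
        + (-y/w)^n * (-(1*t) / (w*t+z*y)^2)) :=
    hex.mono fun t ht => pw_phi n w z t y hw ht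
  have hF : HasDerivAt (fun t => (↑n * (-y/w)^(n-1) * (y/w^2)) * (w*t+z*y)⁻¹
        + (-y/w)^n * (-(1*t) / (w*t+z*y)^2))
      ((↑n * (-y/w)^(n-1) * (y/w^2)) * (-(w*1)/(w*x+z*y)^2)
        + (-y/w)^n * ((-(1*1) * (w*x+z*y)^2 - -(1*x) * (2*(w*x+z*y)^(2-1)*(w*1)))
            / ((w*x+z*y)^2)^2)) x := by
    have hA : HasDerivAt (fun t : ℂ => w*t+z*y) (w*1) x :=
      ((hasDerivAt_id x).const_mul w).add_const (z*y)
    have h1 := (hA.inv h).const_mul (↑n * (-y/w)^(n-1) * (y/w^2))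
    have h2 : HasDerivAt (fun t : ℂ => -(1*t) / (w*t+z*y)^2)
        ((-(1*1) * (w*x+z*y)^2 - -(1*x) * (2*(w*x+z*y)^(2-1)*(w*1))) / ((w*x+z*y)^2)^2) x :=
      (((hasDerivAt_id x).const_mul 1).neg).div (hA.pow 2) (pow_ne_zero 2 h)
    exact h1.add (h2.const_mul _)
  have e1 : px (pw (phiSeq n)) w z x y =
      ((↑n * (-y/w)^(n-1) * (y/w^2)) * (-(w*1)/(w*x+z*y)^2)
        + (-y/w)^n * ((-(1*1) * (w*x+z*y)^2 - -(1*x) * (2*(w*x+z*y)^(2-1)*(w*1)))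
            / ((w*x+z*y)^2)^2)) := by
    show deriv (fun t => pw (phiSeq n) w z t y) x = _
    rw [heq1.deriv_eq]
    exact hF.deriv
  -- py (pz φ)
  have hcy : ContinuousAt (fun t : ℂ => w*x+z*t) y := by fun_prop
  have hey : ∀ᶠ t in nhds y, w*x+z*t ≠ 0 := hcy.eventually_ne h
  have heq2 : (fun t => pz (phiSeq n) w z x t) =ᶠ[nhds y]
      (fun t => (-t/w)^n * (-(1*t) / (w*x+z*t)^2)) :=
    hey.mono fun t ht => pz_phi n w z x t ht
  have hG : HasDerivAt (fun t : ℂ => (-t/w)^n * (-(1*t) / (w*x+z*t)^2))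
      ((↑n * (-y/w)^(n-1) * (-1/w)) * (-(1*y)/(w*x+z*y)^2)
        + (-y/w)^n * ((-(1*1) * (w*x+z*y)^2 - -(1*y) * (2*(w*x+z*y)^(2-1)*(z*1)))
            / ((w*x+z*y)^2)^2)) y := by
    have hu : HasDerivAt (fun t : ℂ => (-t/w)^n) (↑n * (-y/w)^(n-1) * (-1/w)) y :=
      ((hasDerivAt_id y).neg.div_const w).pow n
    have hB : HasDerivAt (fun t : ℂ => w*x+z*t) (z*1) y :=
      ((hasDerivAt_id y).const_mul z).const_add (w*x)
    have hv : HasDerivAt (fun t : ℂ => -(1*t) / (w*x+z*t)^2)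
        ((-(1*1) * (w*x+z*y)^2 - -(1*y) * (2*(w*x+z*y)^(2-1)*(z*1))) / ((w*x+z*y)^2)^2) y :=
      (((hasDerivAt_id y).const_mul 1).neg).div (hB.pow 2) (pow_ne_zero 2 h)
    simpa using hu.fun_mul hv
  have e2 : py (pz (phiSeq n)) w z x y =
      ((↑n * (-y/w)^(n-1) * (-1/w)) * (-(1*y)/(w*x+z*y)^2)
        + (-y/w)^n * ((-(1*1) * (w*x+z*y)^2 - -(1*y) * (2*(w*x+z*y)^(2-1)*(z*1)))
            / ((w*x+z*y)^2)^2)) := by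
    show deriv (fun t => pz (phiSeq n) w z x t) y = _
    rw [heq2.deriv_eq]
    exact hG.deriv
  rw [e1, e2]
  generalize ((-y/w)^(n-1) : ℂ) = P
  generalize ((-y/w)^n : ℂ) = Q
  field_simp
  ring
end

section
/- Among the functions φ_n(w,z,x,y) = (−y/w)^n/(wx+zy) for natural numbers n, the function Θ = φ_n satisfies the full (nonlinear) second heavenly equation Θ_{xw} + Θ_{yz} + Θ_{xx}Θ_{yy} − (Θ_{xy})² = 0 on the region {w ≠ 0, wx+zy ≠ 0} if and only if n = 0 or n = 2. -/
/- ### Helper derivative lemmas -/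

lemma hL (a b t : ℂ) : HasDerivAt (fun s => a * s + b) a t := by
  simpa using ((hasDerivAt_id t).const_mul a).add_const b

lemma hInv {a b t : ℂ} (h : a * t + b ≠ 0) :
    HasDerivAt (fun s => (a * s + b)⁻¹) (-a / (a * t + b) ^ 2) t := by
  simpa [sq] using (hL a b t).fun_inv h

lemma hInvSq {a b t : ℂ} (h : a * t + b ≠ 0) :
    HasDerivAt (fun s => ((a * s + b) ^ 2)⁻¹) (-2 * a / (a * t + b) ^ 3) t := by
  have h2 := ((hL a b t).pow 2).fun_inv (pow_ne_zero 2 h)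
  refine h2.congr_deriv ?_
  simp only [Pi.pow_apply]
  field_simp
  ring

lemma hInvPow (j : ℕ) {t : ℂ} (ht : t ≠ 0) :
    HasDerivAt (fun s : ℂ => (s ^ j)⁻¹) (-(j : ℂ) * (t ^ (j + 1))⁻¹) t := by
  have h2 := (hasDerivAt_pow j t).fun_inv (pow_ne_zero j ht)
  refine h2.congr_deriv ?_
  rcases j with _ | j
  · simp
  · simp only [Nat.add_sub_cancel]
    field_simp
    ring

lemma evLin {a b t : ℂ} (h : a * t + b ≠ 0) : ∀ᶠ s in nhds t, a * s + b ≠ 0 :=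
  (((continuous_const.mul continuous_id).add continuous_const).continuousAt).eventually_ne h

set_option maxHeartbeats 2000000 in
/-- Θ = φ_n satisfies the full nonlinear second heavenly equation on
{w ≠ 0, wx+zy ≠ 0} if and only if n = 0 or n = 2. -/
theorem phiSeq_solves_second_heavenly_iff (n : ℕ) :
    (∀ w z x y : ℂ, w ≠ 0 → w * x + z * y ≠ 0 →
      px (pw (phiSeq n)) w z x y + py (pz (phiSeq n)) w z x y
        + px (px (phiSeq n)) w z x y * py (py (phiSeq n)) w z x y
        - (px (py (phiSeq n)) w z x y) ^ 2 = 0)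
      ↔ (n = 0 ∨ n = 2) := by
  constructor
  · intro h
    -- first partial derivatives on the relevant slices through (1,0,1,1)
    have hpw : ∀ x : ℂ, x ≠ 0 →
        pw (phiSeq n) 1 0 x 1 = ((-1 : ℂ) ^ n * (-((n : ℂ) + 1))) * x⁻¹ := by
      intro x hx
      show deriv (fun t => phiSeq n t 0 x 1) 1 = _
      have hev : (fun t : ℂ => phiSeq n t 0 x 1)
          =ᶠ[nhds 1] (fun t => ((-1 : ℂ) ^ n * x⁻¹) * (t ^ (n + 1))⁻¹) := by
        filter_upwards [eventually_ne_nhds one_ne_zero] with t ht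
        simp only [phiSeq]
        rw [div_pow]
        field_simp
        ring
      rw [hev.deriv_eq, ((hInvPow (n + 1) one_ne_zero).const_mul ((-1 : ℂ) ^ n * x⁻¹)).deriv]
      push_cast
      simp
      ring
    have h1 : px (pw (phiSeq n)) 1 0 1 1 = (-1 : ℂ) ^ n * ((n : ℂ) + 1) := by
      show deriv (fun x => pw (phiSeq n) 1 0 x 1) 1 = _
      have hev : (fun x : ℂ => pw (phiSeq n) 1 0 x 1)
          =ᶠ[nhds 1] fun x => ((-1 : ℂ) ^ n * (-((n : ℂ) + 1))) * x⁻¹ := by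
        filter_upwards [eventually_ne_nhds one_ne_zero] with x hx
        rw [hpw x hx]
      rw [hev.deriv_eq,
        ((hasDerivAt_inv one_ne_zero).const_mul ((-1 : ℂ) ^ n * (-((n : ℂ) + 1)))).deriv]
      simp
      ring
    have hpz : ∀ y : ℂ, pz (phiSeq n) 1 0 1 y = (-y) ^ n * (-y) := by
      intro y
      show deriv (fun t => phiSeq n 1 t 1 y) 0 = _
      have hfe : (fun t : ℂ => phiSeq n 1 t 1 y) = fun t => (-y) ^ n * (y * t + 1)⁻¹ := by
        funext t
        simp only [phiSeq]
        rw [div_one, one_div]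
        ring_nf
      rw [hfe, ((hInv (a := y) (b := 1) (t := 0) (by simp)).const_mul ((-y) ^ n)).deriv]
      simp
    have h2 : py (pz (phiSeq n)) 1 0 1 1 = -((-1 : ℂ) ^ n * ((n : ℂ) + 1)) := by
      show deriv (fun y => pz (phiSeq n) 1 0 1 y) 1 = _
      have hfe : (fun y : ℂ => pz (phiSeq n) 1 0 1 y) = fun y => (-(-1 : ℂ) ^ n) * y ^ (n + 1) := by
        funext y
        rw [hpz y, neg_pow]
        ring
      rw [hfe, ((hasDerivAt_pow (n + 1) 1).const_mul (-(-1 : ℂ) ^ n)).deriv]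
      push_cast
      simp
    have hpx : ∀ x : ℂ, x ≠ 0 →
        px (phiSeq n) 1 0 x 1 = (-(-1 : ℂ) ^ n) * (((1 : ℂ) * x + 0) ^ 2)⁻¹ := by
      intro x hx
      show deriv (fun t => phiSeq n 1 0 t 1) x = _
      have hfe : (fun t : ℂ => phiSeq n 1 0 t 1) = fun t => ((-1 : ℂ) ^ n) * ((1 : ℂ) * t + 0)⁻¹ := by
        funext t
        simp [phiSeq]
      rw [hfe, ((hInv (a := 1) (b := 0) (t := x) (by simpa using hx)).const_mul ((-1 : ℂ) ^ n)).deriv]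
      rw [div_eq_mul_inv]
      ring
    have h3 : px (px (phiSeq n)) 1 0 1 1 = (-1 : ℂ) ^ n * 2 := by
      show deriv (fun x => px (phiSeq n) 1 0 x 1) 1 = _
      have hev : (fun x : ℂ => px (phiSeq n) 1 0 x 1)
          =ᶠ[nhds 1] fun x => (-(-1 : ℂ) ^ n) * (((1 : ℂ) * x + 0) ^ 2)⁻¹ := by
        filter_upwards [eventually_ne_nhds one_ne_zero] with x hx
        rw [hpx x hx]
      rw [hev.deriv_eq,
        ((hInvSq (a := 1) (b := 0) (t := 1) (by norm_num)).const_mul (-(-1 : ℂ) ^ n)).deriv]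
      norm_num
    have hpy : ∀ x y : ℂ,
        py (phiSeq n) 1 0 x y = (x⁻¹ * (-1 : ℂ) ^ n) * ((n : ℂ) * y ^ (n - 1)) := by
      intro x y
      show deriv (fun t => phiSeq n 1 0 x t) y = _
      have hfe : (fun t : ℂ => phiSeq n 1 0 x t) = fun t => (x⁻¹ * (-1 : ℂ) ^ n) * t ^ n := by
        funext t
        simp only [phiSeq]
        rw [div_one, neg_pow]
        rw [one_div]
        ring_nf
      rw [hfe, ((hasDerivAt_pow n y).const_mul (x⁻¹ * (-1 : ℂ) ^ n)).deriv]
    have h4 : py (py (phiSeq n)) 1 0 1 1 = (-1 : ℂ) ^ n * ((n : ℂ) * ((n - 1 : ℕ) : ℂ)) := by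
      show deriv (fun y => py (phiSeq n) 1 0 1 y) 1 = _
      have hfe : (fun y : ℂ => py (phiSeq n) 1 0 1 y)
          = fun y => ((-1 : ℂ) ^ n * (n : ℂ)) * y ^ (n - 1) := by
        funext y
        rw [hpy 1 y]
        simp
        ring
      rw [hfe, ((hasDerivAt_pow (n - 1) 1).const_mul ((-1 : ℂ) ^ n * (n : ℂ))).deriv]
      simp
      ring
    have h5 : px (py (phiSeq n)) 1 0 1 1 = -((-1 : ℂ) ^ n * (n : ℂ)) := by
      show deriv (fun x => py (phiSeq n) 1 0 x 1) 1 = _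
      have hfe : (fun x : ℂ => py (phiSeq n) 1 0 x 1)
          = fun x => ((-1 : ℂ) ^ n * (n : ℂ)) * x⁻¹ := by
        funext x
        rw [hpy x 1]
        simp
        ring
      rw [hfe, ((hasDerivAt_inv one_ne_zero).const_mul ((-1 : ℂ) ^ n * (n : ℂ))).deriv]
      simp
    have e := h 1 0 1 1 one_ne_zero (by norm_num)
    rw [h1, h2, h3, h4, h5] at e
    have hs : ((-1 : ℂ) ^ n) ^ 2 = 1 := by
      rw [← pow_mul, mul_comm, pow_mul]
      norm_num
    have key : 2 * ((n : ℂ) * ((n - 1 : ℕ) : ℂ)) - (n : ℂ) ^ 2 = 0 := by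
      linear_combination e - (2 * ((n : ℂ) * ((n - 1 : ℕ) : ℂ)) - (n : ℂ) ^ 2) * hs
    rcases n with _ | m
    · exact Or.inl rfl
    · right
      simp only [Nat.add_sub_cancel] at key
      push_cast at key
      have hm : ((m : ℂ) - 1) * ((m : ℂ) + 1) = 0 := by linear_combination key
      rcases mul_eq_zero.mp hm with hm1 | hm2
      · have : (m : ℂ) = 1 := by linear_combination hm1
        have : m = 1 := by exact_mod_cast this
        omega
      · exact absurd (by linear_combination hm2) (Nat.cast_add_one_ne_zero m)
  · rintro (rfl | rfl) <;> intro w z x y hw hD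
    · -- n = 0
      have hDc : z * y + w * x ≠ 0 := by rwa [add_comm] at hD
      have h0w : ∀ x' : ℂ, w * x' + z * y ≠ 0 →
          pw (phiSeq 0) w z x' y = -x' * ((w * x' + z * y) ^ 2)⁻¹ := by
        intro x' hD'
        show deriv (fun t => phiSeq 0 t z x' y) w = _
        have hfe : (fun t : ℂ => phiSeq 0 t z x' y) = fun t => (x' * t + z * y)⁻¹ := by
          funext t
          simp only [phiSeq, pow_zero, one_mul, one_div]
          ring_nf
        rw [hfe, (hInv (a := x') (b := z * y) (t := w)
          (by rw [show x' * w + z * y = w * x' + z * y from by ring]; exact hD')).deriv]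
        rw [show x' * w + z * y = w * x' + z * y from by ring, div_eq_mul_inv]
      have h0z : ∀ y' : ℂ, w * x + z * y' ≠ 0 →
          pz (phiSeq 0) w z x y' = -y' * ((w * x + z * y') ^ 2)⁻¹ := by
        intro y' hD'
        show deriv (fun t => phiSeq 0 w t x y') z = _
        have hfe : (fun t : ℂ => phiSeq 0 w t x y') = fun t => (y' * t + w * x)⁻¹ := by
          funext t
          simp only [phiSeq, pow_zero, one_mul, one_div]
          ring_nf
        rw [hfe, (hInv (a := y') (b := w * x) (t := z)
          (by rw [show y' * z + w * x = w * x + z * y' from by ring]; exact hD')).deriv]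
        rw [show y' * z + w * x = w * x + z * y' from by ring, div_eq_mul_inv]
      have h0x : ∀ x' : ℂ, w * x' + z * y ≠ 0 →
          px (phiSeq 0) w z x' y = -w * ((w * x' + z * y) ^ 2)⁻¹ := by
        intro x' hD'
        show deriv (fun t => phiSeq 0 w z t y) x' = _
        have hfe : (fun t : ℂ => phiSeq 0 w z t y) = fun t => (w * t + z * y)⁻¹ := by
          funext t
          simp [phiSeq]
        rw [hfe, (hInv hD').deriv, div_eq_mul_inv]
      have h0y : ∀ x' y' : ℂ, w * x' + z * y' ≠ 0 →
          py (phiSeq 0) w z x' y' = -z * ((w * x' + z * y') ^ 2)⁻¹ := by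
        intro x' y' hD'
        show deriv (fun t => phiSeq 0 w z x' t) y' = _
        have hfe : (fun t : ℂ => phiSeq 0 w z x' t) = fun t => (z * t + w * x')⁻¹ := by
          funext t
          simp only [phiSeq, pow_zero, one_mul, one_div]
          ring_nf
        rw [hfe, (hInv (a := z) (b := w * x') (t := y')
          (by rw [show z * y' + w * x' = w * x' + z * y' from by ring]; exact hD')).deriv]
        rw [show z * y' + w * x' = w * x' + z * y' from by ring, div_eq_mul_inv]
      -- second derivatives
      have Hxw : px (pw (phiSeq 0)) w z x y
          = -1 * ((w * x + z * y) ^ 2)⁻¹ + -x * (-2 * w / (w * x + z * y) ^ 3) := by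
        show deriv (fun x' => pw (phiSeq 0) w z x' y) x = _
        have hev : (fun x' : ℂ => pw (phiSeq 0) w z x' y)
            =ᶠ[nhds x] fun x' => -x' * ((w * x' + z * y) ^ 2)⁻¹ := by
          filter_upwards [evLin hD] with x' hD'
          rw [h0w x' hD']
        rw [hev.deriv_eq, ((hasDerivAt_id' x).fun_neg.fun_mul (hInvSq hD)).deriv]
      have Hyz : py (pz (phiSeq 0)) w z x y
          = -1 * ((w * x + z * y) ^ 2)⁻¹ + -y * (-2 * z / (w * x + z * y) ^ 3) := by
        show deriv (fun y' => pz (phiSeq 0) w z x y') y = _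
        have hev : (fun y' : ℂ => pz (phiSeq 0) w z x y')
            =ᶠ[nhds y] fun y' => -y' * ((z * y' + w * x) ^ 2)⁻¹ := by
          filter_upwards [evLin hDc] with y' hD'
          rw [h0z y' (by rwa [add_comm] at hD')]
          rw [show z * y' + w * x = w * x + z * y' from by ring]
        rw [hev.deriv_eq, ((hasDerivAt_id' y).fun_neg.fun_mul (hInvSq hDc)).deriv]
        rw [show z * y + w * x = w * x + z * y from by ring]
      have Hxx : px (px (phiSeq 0)) w z x y = -w * (-2 * w / (w * x + z * y) ^ 3) := by
        show deriv (fun x' => px (phiSeq 0) w z x' y) x = _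
        have hev : (fun x' : ℂ => px (phiSeq 0) w z x' y)
            =ᶠ[nhds x] fun x' => -w * ((w * x' + z * y) ^ 2)⁻¹ := by
          filter_upwards [evLin hD] with x' hD'
          rw [h0x x' hD']
        rw [hev.deriv_eq, ((hInvSq hD).const_mul (-w)).deriv]
      have Hyy : py (py (phiSeq 0)) w z x y = -z * (-2 * z / (w * x + z * y) ^ 3) := by
        show deriv (fun y' => py (phiSeq 0) w z x y') y = _
        have hev : (fun y' : ℂ => py (phiSeq 0) w z x y')
            =ᶠ[nhds y] fun y' => -z * ((z * y' + w * x) ^ 2)⁻¹ := by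
          filter_upwards [evLin hDc] with y' hD'
          rw [h0y x y' (by rwa [add_comm] at hD')]
          rw [show z * y' + w * x = w * x + z * y' from by ring]
        rw [hev.deriv_eq, ((hInvSq hDc).const_mul (-z)).deriv]
        rw [show z * y + w * x = w * x + z * y from by ring]
      have Hxy : px (py (phiSeq 0)) w z x y = -z * (-2 * w / (w * x + z * y) ^ 3) := by
        show deriv (fun x' => py (phiSeq 0) w z x' y) x = _
        have hev : (fun x' : ℂ => py (phiSeq 0) w z x' y)
            =ᶠ[nhds x] fun x' => -z * ((w * x' + z * y) ^ 2)⁻¹ := by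
          filter_upwards [evLin hD] with x' hD'
          rw [h0y x' y hD']
        rw [hev.deriv_eq, ((hInvSq hD).const_mul (-z)).deriv]
      rw [Hxw, Hyz, Hxx, Hyy, Hxy]
      field_simp
      ring
    · -- n = 2
      have hDc : z * y + w * x ≠ 0 := by rwa [add_comm] at hD
      have h2w : ∀ x' : ℂ, w * x' + z * y ≠ 0 →
          pw (phiSeq 2) w z x' y
            = -y ^ 2 * (3 * w * x' + 2 * (z * y)) / (w ^ 3 * (w * x' + z * y) ^ 2) := by
        intro x' hD'
        show deriv (fun t => phiSeq 2 t z x' y) w = _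
        have hev : (fun t : ℂ => phiSeq 2 t z x' y)
            =ᶠ[nhds w] fun t => y ^ 2 * ((t ^ 2)⁻¹ * (x' * t + z * y)⁻¹) := by
          filter_upwards [eventually_ne_nhds hw] with t ht
          simp only [phiSeq]
          rw [div_pow, one_div, neg_pow]
          ring_nf
        rw [hev.deriv_eq,
          (((hInvPow 2 hw).fun_mul (hInv (a := x') (b := z * y) (t := w)
            (by rw [show x' * w + z * y = w * x' + z * y from by ring]; exact hD'))).const_mul
            (y ^ 2)).deriv]
        rw [show x' * w + z * y = w * x' + z * y from by ring]
        push_cast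
        field_simp
        ring
      have h2z : ∀ y' : ℂ, w * x + z * y' ≠ 0 →
          pz (phiSeq 2) w z x y' = -y' ^ 3 / (w ^ 2 * (w * x + z * y') ^ 2) := by
        intro y' hD'
        show deriv (fun t => phiSeq 2 w t x y') z = _
        have hfe : (fun t : ℂ => phiSeq 2 w t x y')
            = fun t => (y' ^ 2 * (w ^ 2)⁻¹) * (y' * t + w * x)⁻¹ := by
          funext t
          simp only [phiSeq]
          rw [div_pow, one_div, neg_pow]
          ring_nf
        rw [hfe, ((hInv (a := y') (b := w * x) (t := z)
          (by rw [show y' * z + w * x = w * x + z * y' from by ring]; exact hD')).const_mul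
          (y' ^ 2 * (w ^ 2)⁻¹)).deriv]
        rw [show y' * z + w * x = w * x + z * y' from by ring]
        field_simp
      have h2x : ∀ x' : ℂ, w * x' + z * y ≠ 0 →
          px (phiSeq 2) w z x' y = -(y ^ 2) / (w * (w * x' + z * y) ^ 2) := by
        intro x' hD'
        show deriv (fun t => phiSeq 2 w z t y) x' = _
        have hfe : (fun t : ℂ => phiSeq 2 w z t y)
            = fun t => (y ^ 2 * (w ^ 2)⁻¹) * (w * t + z * y)⁻¹ := by
          funext t
          simp only [phiSeq]
          rw [div_pow, one_div, neg_pow]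
          ring_nf
        rw [hfe, ((hInv hD').const_mul (y ^ 2 * (w ^ 2)⁻¹)).deriv]
        field_simp
      have h2y : ∀ x' y' : ℂ, w * x' + z * y' ≠ 0 →
          py (phiSeq 2) w z x' y'
            = (2 / w ^ 2) * (y' * (z * y' + w * x')⁻¹)
              - (z / w ^ 2) * (y' ^ 2 * ((z * y' + w * x') ^ 2)⁻¹) := by
        intro x' y' hD'
        show deriv (fun t => phiSeq 2 w z x' t) y' = _
        have hfe : (fun t : ℂ => phiSeq 2 w z x' t)
            = fun t => (w ^ 2)⁻¹ * (t ^ 2 * (z * t + w * x')⁻¹) := by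
          funext t
          simp only [phiSeq]
          rw [div_pow, one_div, neg_pow]
          ring_nf
        have hzy : z * y' + w * x' ≠ 0 := by rwa [add_comm] at hD'
        rw [hfe, (((hasDerivAt_pow 2 y').fun_mul (hInv hzy)).const_mul ((w ^ 2)⁻¹)).deriv]
        push_cast
        field_simp
        ring
      -- second derivatives
      have Hxw : px (pw (phiSeq 2)) w z x y
          = y ^ 2 * (3 * w * x + z * y) / (w ^ 2 * (w * x + z * y) ^ 3) := by
        show deriv (fun x' => pw (phiSeq 2) w z x' y) x = _
        have hev : (fun x' : ℂ => pw (phiSeq 2) w z x' y)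
            =ᶠ[nhds x] fun x' => (-y ^ 2 / w ^ 3)
              * ((3 * w * x' + 2 * (z * y)) * ((w * x' + z * y) ^ 2)⁻¹) := by
          filter_upwards [evLin hD] with x' hD'
          rw [h2w x' hD']
          field_simp
        rw [hev.deriv_eq,
          (((hL (3 * w) (2 * (z * y)) x).fun_mul (hInvSq hD)).const_mul (-y ^ 2 / w ^ 3)).deriv]
        field_simp
        ring
      have Hyz : py (pz (phiSeq 2)) w z x y
          = -(y ^ 2) * (3 * w * x + z * y) / (w ^ 2 * (w * x + z * y) ^ 3) := by
        show deriv (fun y' => pz (phiSeq 2) w z x y') y = _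
        have hev : (fun y' : ℂ => pz (phiSeq 2) w z x y')
            =ᶠ[nhds y] fun y' => (-1 / w ^ 2) * (y' ^ 3 * ((z * y' + w * x) ^ 2)⁻¹) := by
          filter_upwards [evLin hDc] with y' hD'
          rw [h2z y' (by rwa [add_comm] at hD')]
          rw [show z * y' + w * x = w * x + z * y' from by ring]
          rw [div_eq_mul_inv, mul_inv]
          ring
        rw [hev.deriv_eq,
          (((hasDerivAt_pow 3 y).fun_mul (hInvSq hDc)).const_mul (-1 / w ^ 2)).deriv]
        rw [show z * y + w * x = w * x + z * y from by ring]
        push_cast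
        field_simp
        ring
      have Hxx : px (px (phiSeq 2)) w z x y = 2 * y ^ 2 / (w * x + z * y) ^ 3 := by
        show deriv (fun x' => px (phiSeq 2) w z x' y) x = _
        have hev : (fun x' : ℂ => px (phiSeq 2) w z x' y)
            =ᶠ[nhds x] fun x' => (-(y ^ 2) / w) * ((w * x' + z * y) ^ 2)⁻¹ := by
          filter_upwards [evLin hD] with x' hD'
          rw [h2x x' hD']
          field_simp
        rw [hev.deriv_eq, ((hInvSq hD).const_mul (-(y ^ 2) / w)).deriv]
        field_simp
      have Hyy : py (py (phiSeq 2)) w z x y = 2 * x ^ 2 / (w * x + z * y) ^ 3 := by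
        show deriv (fun y' => py (phiSeq 2) w z x y') y = _
        have hev : (fun y' : ℂ => py (phiSeq 2) w z x y')
            =ᶠ[nhds y] fun y' => (2 / w ^ 2) * (y' * (z * y' + w * x)⁻¹)
              - (z / w ^ 2) * (y' ^ 2 * ((z * y' + w * x) ^ 2)⁻¹) := by
          filter_upwards [evLin hDc] with y' hD'
          rw [h2y x y' (by rwa [add_comm] at hD')]
        have ha := ((hasDerivAt_id' y).fun_mul (hInv hDc)).const_mul ((2 : ℂ) / w ^ 2)
        have hb := ((hasDerivAt_pow 2 y).fun_mul (hInvSq hDc)).const_mul (z / w ^ 2)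
        rw [hev.deriv_eq, (ha.fun_sub hb).deriv]
        rw [show z * y + w * x = w * x + z * y from by ring]
        norm_num
        have hB := mul_inv_cancel₀ hD
        have hW := mul_inv_cancel₀ hw
        simp only [div_eq_mul_inv, mul_inv, ← inv_pow, one_mul]
        linear_combination (-2 * (w⁻¹) ^ 2 * (w * x + z * y)⁻¹
            * (1 - z * y * (w * x + z * y)⁻¹ + w * x * (w * x + z * y)⁻¹)) * hB
          + (2 * x ^ 2 * ((w * x + z * y)⁻¹) ^ 3 * (w * w⁻¹ + 1)) * hW
      have Hxy : px (py (phiSeq 2)) w z x y = -2 * x * y / (w * x + z * y) ^ 3 := by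
        show deriv (fun x' => py (phiSeq 2) w z x' y) x = _
        have hev : (fun x' : ℂ => py (phiSeq 2) w z x' y)
            =ᶠ[nhds x] fun x' => (2 * y / w ^ 2) * (w * x' + z * y)⁻¹
              - (z * y ^ 2 / w ^ 2) * ((w * x' + z * y) ^ 2)⁻¹ := by
          filter_upwards [evLin hD] with x' hD'
          rw [h2y x' y hD']
          rw [show z * y + w * x' = w * x' + z * y from by ring]
          ring
        have ha := (hInv hD).const_mul (2 * y / w ^ 2)
        have hb := (hInvSq hD).const_mul (z * y ^ 2 / w ^ 2)
        rw [hev.deriv_eq, (ha.fun_sub hb).deriv]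
        field_simp
        ring
      rw [Hxw, Hyz, Hxx, Hyy, Hxy]
      field_simp
      ring
end

section
/- Let Θ be a smooth function of (w,z,x,y) satisfying the second heavenly equation Θ_{xw} + Θ_{yz} + Θ_{xx}Θ_{yy} − (Θ_{xy})² = 0. Then for every λ ∈ ℂ the two vector fields L₀ = ∂_y − λ(∂_w − Θ_{xy}∂_y + Θ_{yy}∂_x) and L₁ = ∂_x + λ(∂_z + Θ_{xx}∂_y − Θ_{xy}∂_x) commute: [L₀, L₁] = 0. -/
/-- Smoothness of a function of four complex variables. -/
def Smooth4 (f : ℂ → ℂ → ℂ → ℂ → ℂ) : Prop :=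
  ContDiff ℂ ⊤ (fun p : ℂ × ℂ × ℂ × ℂ => f p.1 p.2.1 p.2.2.1 p.2.2.2)

namespace Heavenly

def unc (f : ℂ → ℂ → ℂ → ℂ → ℂ) : ℂ × ℂ × ℂ × ℂ → ℂ :=
  fun p => f p.1 p.2.1 p.2.2.1 p.2.2.2

variable {f : ℂ → ℂ → ℂ → ℂ → ℂ} {w z x y : ℂ}

theorem smooth_unc (hf : Smooth4 f) : ContDiff ℂ ⊤ (unc f) := hf

theorem hd_w' (hf : Smooth4 f) :
    HasDerivAt (fun t => f t z x y)
      (fderiv ℂ (unc f) (w, z, x, y) (1, 0, 0, 0)) w := by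
  have hline : HasDerivAt (fun t : ℂ => ((t, z, x, y) : ℂ × ℂ × ℂ × ℂ))
      ((1 : ℂ), (0 : ℂ), (0 : ℂ), (0 : ℂ)) w :=
    (hasDerivAt_id w).prodMk ((hasDerivAt_const w z).prodMk
      ((hasDerivAt_const w x).prodMk (hasDerivAt_const w y)))
  exact ((smooth_unc hf).differentiable (by simp) (w, z, x, y)).hasFDerivAt.comp_hasDerivAt w hline

theorem hd_z' (hf : Smooth4 f) :
    HasDerivAt (fun t => f w t x y)
      (fderiv ℂ (unc f) (w, z, x, y) (0, 1, 0, 0)) z := by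
  have hline : HasDerivAt (fun t : ℂ => ((w, t, x, y) : ℂ × ℂ × ℂ × ℂ))
      ((0 : ℂ), (1 : ℂ), (0 : ℂ), (0 : ℂ)) z :=
    (hasDerivAt_const z w).prodMk ((hasDerivAt_id z).prodMk
      ((hasDerivAt_const z x).prodMk (hasDerivAt_const z y)))
  exact ((smooth_unc hf).differentiable (by simp) (w, z, x, y)).hasFDerivAt.comp_hasDerivAt z hline

theorem hd_x' (hf : Smooth4 f) :
    HasDerivAt (fun t => f w z t y)
      (fderiv ℂ (unc f) (w, z, x, y) (0, 0, 1, 0)) x := by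
  have hline : HasDerivAt (fun t : ℂ => ((w, z, t, y) : ℂ × ℂ × ℂ × ℂ))
      ((0 : ℂ), (0 : ℂ), (1 : ℂ), (0 : ℂ)) x :=
    (hasDerivAt_const x w).prodMk ((hasDerivAt_const x z).prodMk
      ((hasDerivAt_id x).prodMk (hasDerivAt_const x y)))
  exact ((smooth_unc hf).differentiable (by simp) (w, z, x, y)).hasFDerivAt.comp_hasDerivAt x hline

theorem hd_y' (hf : Smooth4 f) :
    HasDerivAt (fun t => f w z x t)
      (fderiv ℂ (unc f) (w, z, x, y) (0, 0, 0, 1)) y := by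
  have hline : HasDerivAt (fun t : ℂ => ((w, z, x, t) : ℂ × ℂ × ℂ × ℂ))
      ((0 : ℂ), (0 : ℂ), (0 : ℂ), (1 : ℂ)) y :=
    (hasDerivAt_const y w).prodMk ((hasDerivAt_const y z).prodMk
      ((hasDerivAt_const y x).prodMk (hasDerivAt_id y)))
  exact ((smooth_unc hf).differentiable (by simp) (w, z, x, y)).hasFDerivAt.comp_hasDerivAt y hline

theorem pw_eq (hf : Smooth4 f) :
    pw f w z x y = fderiv ℂ (unc f) (w, z, x, y) (1, 0, 0, 0) := (hd_w' hf).deriv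
theorem pz_eq (hf : Smooth4 f) :
    pz f w z x y = fderiv ℂ (unc f) (w, z, x, y) (0, 1, 0, 0) := (hd_z' hf).deriv
theorem px_eq (hf : Smooth4 f) :
    px f w z x y = fderiv ℂ (unc f) (w, z, x, y) (0, 0, 1, 0) := (hd_x' hf).deriv
theorem py_eq (hf : Smooth4 f) :
    py f w z x y = fderiv ℂ (unc f) (w, z, x, y) (0, 0, 0, 1) := (hd_y' hf).deriv

theorem hd_w (hf : Smooth4 f) : HasDerivAt (fun t => f t z x y) (pw f w z x y) w := by
  rw [pw_eq hf]; exact hd_w' hf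
theorem hd_z (hf : Smooth4 f) : HasDerivAt (fun t => f w t x y) (pz f w z x y) z := by
  rw [pz_eq hf]; exact hd_z' hf
theorem hd_x (hf : Smooth4 f) : HasDerivAt (fun t => f w z t y) (px f w z x y) x := by
  rw [px_eq hf]; exact hd_x' hf
theorem hd_y (hf : Smooth4 f) : HasDerivAt (fun t => f w z x t) (py f w z x y) y := by
  rw [py_eq hf]; exact hd_y' hf

theorem unc_pd_eq (hf : Smooth4 f) (v : ℂ × ℂ × ℂ × ℂ) :
    (fun p => fderiv ℂ (unc f) p v) = fun p => fderiv ℂ (unc f) p v := rfl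

theorem smooth_fderiv_apply (hf : Smooth4 f) (v : ℂ × ℂ × ℂ × ℂ) :
    ContDiff ℂ ⊤ (fun p => fderiv ℂ (unc f) p v) :=
  (ContinuousLinearMap.apply ℂ ℂ v).contDiff.comp ((smooth_unc hf).fderiv_right le_top)

theorem unc_pw (hf : Smooth4 f) : unc (pw f) = fun p => fderiv ℂ (unc f) p (1,0,0,0) :=
  funext fun ⟨w, z, x, y⟩ => pw_eq hf
theorem unc_pz (hf : Smooth4 f) : unc (pz f) = fun p => fderiv ℂ (unc f) p (0,1,0,0) :=
  funext fun ⟨w, z, x, y⟩ => pz_eq hf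
theorem unc_px (hf : Smooth4 f) : unc (px f) = fun p => fderiv ℂ (unc f) p (0,0,1,0) :=
  funext fun ⟨w, z, x, y⟩ => px_eq hf
theorem unc_py (hf : Smooth4 f) : unc (py f) = fun p => fderiv ℂ (unc f) p (0,0,0,1) :=
  funext fun ⟨w, z, x, y⟩ => py_eq hf

theorem smooth_pw (hf : Smooth4 f) : Smooth4 (pw f) := by
  have : unc (pw f) = fun p => fderiv ℂ (unc f) p (1,0,0,0) := unc_pw hf
  exact (show ContDiff ℂ ⊤ (unc (pw f)) from this ▸ smooth_fderiv_apply hf _)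
theorem smooth_pz (hf : Smooth4 f) : Smooth4 (pz f) := by
  have : unc (pz f) = fun p => fderiv ℂ (unc f) p (0,1,0,0) := unc_pz hf
  exact (show ContDiff ℂ ⊤ (unc (pz f)) from this ▸ smooth_fderiv_apply hf _)
theorem smooth_px (hf : Smooth4 f) : Smooth4 (px f) := by
  have : unc (px f) = fun p => fderiv ℂ (unc f) p (0,0,1,0) := unc_px hf
  exact (show ContDiff ℂ ⊤ (unc (px f)) from this ▸ smooth_fderiv_apply hf _)
theorem smooth_py (hf : Smooth4 f) : Smooth4 (py f) := by
  have : unc (py f) = fun p => fderiv ℂ (unc f) p (0,0,0,1) := unc_py hf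
  exact (show ContDiff ℂ ⊤ (unc (py f)) from this ▸ smooth_fderiv_apply hf _)

theorem swap (hf : Smooth4 f) (p u v : ℂ × ℂ × ℂ × ℂ) :
    fderiv ℂ (fun q => fderiv ℂ (unc f) q u) p v
      = fderiv ℂ (fun q => fderiv ℂ (unc f) q v) p u := by
  have h2 : DifferentiableAt ℂ (fderiv ℂ (unc f)) p :=
    (((smooth_unc hf).fderiv_right (m := ⊤) le_top).differentiable (by simp)) p
  have key : ∀ a b : ℂ × ℂ × ℂ × ℂ,
      fderiv ℂ (fun q => fderiv ℂ (unc f) q a) p b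
        = fderiv ℂ (fderiv ℂ (unc f)) p b a := by
    intro a b
    have := ((ContinuousLinearMap.apply ℂ ℂ a).hasFDerivAt.comp p h2.hasFDerivAt).fderiv
    rw [show (fun q => fderiv ℂ (unc f) q a)
        = (ContinuousLinearMap.apply ℂ ℂ a) ∘ (fderiv ℂ (unc f)) from rfl, this]
    rfl
  rw [key u v, key v u]
  exact ((smooth_unc hf).contDiffAt.isSymmSndFDerivAt le_top) v u


-- commuting mixed partials, oriented so that letters w<z<x<y move outward
theorem comm_xy (hf : Smooth4 f) : py (px f) = px (py f) := by
  funext w z x y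
  rw [py_eq (smooth_px hf), px_eq (smooth_py hf), unc_px hf, unc_py hf]
  exact swap hf (w,z,x,y) _ _
theorem comm_zy (hf : Smooth4 f) : py (pz f) = pz (py f) := by
  funext w z x y
  rw [py_eq (smooth_pz hf), pz_eq (smooth_py hf), unc_pz hf, unc_py hf]
  exact swap hf (w,z,x,y) _ _
theorem comm_zx (hf : Smooth4 f) : px (pz f) = pz (px f) := by
  funext w z x y
  rw [px_eq (smooth_pz hf), pz_eq (smooth_px hf), unc_pz hf, unc_px hf]
  exact swap hf (w,z,x,y) _ _
theorem comm_wy (hf : Smooth4 f) : py (pw f) = pw (py f) := by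
  funext w z x y
  rw [py_eq (smooth_pw hf), pw_eq (smooth_py hf), unc_pw hf, unc_py hf]
  exact swap hf (w,z,x,y) _ _
theorem comm_wx (hf : Smooth4 f) : px (pw f) = pw (px f) := by
  funext w z x y
  rw [px_eq (smooth_pw hf), pw_eq (smooth_px hf), unc_pw hf, unc_px hf]
  exact swap hf (w,z,x,y) _ _
theorem comm_wz (hf : Smooth4 f) : pz (pw f) = pw (pz f) := by
  funext w z x y
  rw [pz_eq (smooth_pw hf), pw_eq (smooth_pz hf), unc_pw hf, unc_pz hf]
  exact swap hf (w,z,x,y) _ _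

end Heavenly

/-- L₀ = ∂_y − λ(∂_w − Θ_{xy}∂_y + Θ_{yy}∂_x), acting on functions. -/
noncomputable def LaxL0 (Θ : ℂ → ℂ → ℂ → ℂ → ℂ) (lam : ℂ)
    (g : ℂ → ℂ → ℂ → ℂ → ℂ) : ℂ → ℂ → ℂ → ℂ → ℂ :=
  fun w z x y =>
    py g w z x y - lam * (pw g w z x y
      - px (py Θ) w z x y * py g w z x y
      + py (py Θ) w z x y * px g w z x y)

/-- L₁ = ∂_x + λ(∂_z + Θ_{xx}∂_y − Θ_{xy}∂_x), acting on functions. -/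
noncomputable def LaxL1 (Θ : ℂ → ℂ → ℂ → ℂ → ℂ) (lam : ℂ)
    (g : ℂ → ℂ → ℂ → ℂ → ℂ) : ℂ → ℂ → ℂ → ℂ → ℂ :=
  fun w z x y =>
    px g w z x y + lam * (pz g w z x y
      + px (px Θ) w z x y * py g w z x y
      - px (py Θ) w z x y * px g w z x y)

/-- If Θ solves the second heavenly equation then the Lax pair commutes:
[L₀, L₁] = 0, i.e. L₀L₁f = L₁L₀f on smooth functions f, for every λ. -/
theorem lax_pair_commutes_second_heavenly
    (Θ : ℂ → ℂ → ℂ → ℂ → ℂ) (hΘ : Smooth4 Θ)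
    (heav : ∀ w z x y : ℂ,
      px (pw Θ) w z x y + py (pz Θ) w z x y
        + px (px Θ) w z x y * py (py Θ) w z x y
        - (px (py Θ) w z x y) ^ 2 = 0) :
    ∀ (lam : ℂ) (f : ℂ → ℂ → ℂ → ℂ → ℂ), Smooth4 f →
      ∀ w z x y : ℂ,
        LaxL0 Θ lam (LaxL1 Θ lam f) w z x y
          = LaxL1 Θ lam (LaxL0 Θ lam f) w z x y := by
  intro lam f hf w z x y
  open Heavenly in
  -- expansions of the six inner derivatives
  have e1 : py (LaxL1 Θ lam f) w z x y = _ :=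
    ((hd_y (smooth_px hf)).add ((((hd_y (smooth_pz hf)).add
      ((hd_y (smooth_px (smooth_px hΘ))).mul (hd_y (smooth_py hf)))).sub
      ((hd_y (smooth_px (smooth_py hΘ))).mul (hd_y (smooth_px hf)))).const_mul lam)).deriv
  have e2 : pw (LaxL1 Θ lam f) w z x y = _ :=
    ((hd_w (smooth_px hf)).add ((((hd_w (smooth_pz hf)).add
      ((hd_w (smooth_px (smooth_px hΘ))).mul (hd_w (smooth_py hf)))).sub
      ((hd_w (smooth_px (smooth_py hΘ))).mul (hd_w (smooth_px hf)))).const_mul lam)).deriv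
  have e3 : px (LaxL1 Θ lam f) w z x y = _ :=
    ((hd_x (smooth_px hf)).add ((((hd_x (smooth_pz hf)).add
      ((hd_x (smooth_px (smooth_px hΘ))).mul (hd_x (smooth_py hf)))).sub
      ((hd_x (smooth_px (smooth_py hΘ))).mul (hd_x (smooth_px hf)))).const_mul lam)).deriv
  have e4 : px (LaxL0 Θ lam f) w z x y = _ :=
    ((hd_x (smooth_py hf)).sub ((((hd_x (smooth_pw hf)).sub
      ((hd_x (smooth_px (smooth_py hΘ))).mul (hd_x (smooth_py hf)))).add
      ((hd_x (smooth_py (smooth_py hΘ))).mul (hd_x (smooth_px hf)))).const_mul lam)).deriv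
  have e5 : pz (LaxL0 Θ lam f) w z x y = _ :=
    ((hd_z (smooth_py hf)).sub ((((hd_z (smooth_pw hf)).sub
      ((hd_z (smooth_px (smooth_py hΘ))).mul (hd_z (smooth_py hf)))).add
      ((hd_z (smooth_py (smooth_py hΘ))).mul (hd_z (smooth_px hf)))).const_mul lam)).deriv
  have e6 : py (LaxL0 Θ lam f) w z x y = _ :=
    ((hd_y (smooth_py hf)).sub ((((hd_y (smooth_pw hf)).sub
      ((hd_y (smooth_px (smooth_py hΘ))).mul (hd_y (smooth_py hf)))).add
      ((hd_y (smooth_py (smooth_py hΘ))).mul (hd_y (smooth_px hf)))).const_mul lam)).deriv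
  -- x- and y-derivatives of the heavenly equation
  have hx0 := (((hd_x (smooth_px (smooth_pw hΘ)) (w:=w) (z:=z) (x:=x) (y:=y)).add
      (hd_x (smooth_py (smooth_pz hΘ)) (w:=w) (z:=z) (x:=x) (y:=y))).add
      ((hd_x (smooth_px (smooth_px hΘ)) (w:=w) (z:=z) (x:=x) (y:=y)).mul (hd_x (smooth_py (smooth_py hΘ)) (w:=w) (z:=z) (x:=x) (y:=y)))).sub
      ((hd_x (smooth_px (smooth_py hΘ)) (w:=w) (z:=z) (x:=x) (y:=y)).pow 2)
  have hy0 := (((hd_y (smooth_px (smooth_pw hΘ)) (w:=w) (z:=z) (x:=x) (y:=y)).add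
      (hd_y (smooth_py (smooth_pz hΘ)) (w:=w) (z:=z) (x:=x) (y:=y))).add
      ((hd_y (smooth_px (smooth_px hΘ)) (w:=w) (z:=z) (x:=x) (y:=y)).mul (hd_y (smooth_py (smooth_py hΘ)) (w:=w) (z:=z) (x:=x) (y:=y)))).sub
      ((hd_y (smooth_px (smooth_py hΘ)) (w:=w) (z:=z) (x:=x) (y:=y)).pow 2)
  have hcx : (fun t => px (pw Θ) w z t y + py (pz Θ) w z t y
      + px (px Θ) w z t y * py (py Θ) w z t y - px (py Θ) w z t y ^ 2)
      = (fun _ : ℂ => (0 : ℂ)) := funext fun t => heav w z t y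
  have hcy : (fun t => px (pw Θ) w z x t + py (pz Θ) w z x t
      + px (px Θ) w z x t * py (py Θ) w z x t - px (py Θ) w z x t ^ 2)
      = (fun _ : ℂ => (0 : ℂ)) := funext fun t => heav w z x t
  simp only [Pi.add_def, Pi.mul_def, Pi.sub_def, Pi.pow_def] at hx0 hy0
  rw [hcx] at hx0
  rw [hcy] at hy0
  have hx1 := hx0.unique (hasDerivAt_const x (0 : ℂ))
  have hy1 := hy0.unique (hasDerivAt_const y (0 : ℂ))
  show py (LaxL1 Θ lam f) w z x y - lam * (pw (LaxL1 Θ lam f) w z x y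
      - px (py Θ) w z x y * py (LaxL1 Θ lam f) w z x y
      + py (py Θ) w z x y * px (LaxL1 Θ lam f) w z x y)
    = px (LaxL0 Θ lam f) w z x y + lam * (pz (LaxL0 Θ lam f) w z x y
      + px (px Θ) w z x y * py (LaxL0 Θ lam f) w z x y
      - px (py Θ) w z x y * px (LaxL0 Θ lam f) w z x y)
  rw [e1, e2, e3, e4, e5, e6]
  simp only [comm_xy hf, comm_zy hf, comm_zx hf, comm_wx hf, comm_wz hf, comm_wy hf,
    comm_xy hΘ, comm_zy hΘ, comm_zx hΘ, comm_wx hΘ, comm_wz hΘ, comm_wy hΘ,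
    comm_xy (smooth_px hΘ), comm_zy (smooth_px hΘ), comm_zx (smooth_px hΘ),
    comm_wx (smooth_px hΘ), comm_wz (smooth_px hΘ), comm_wy (smooth_px hΘ),
    comm_xy (smooth_py hΘ), comm_zy (smooth_py hΘ), comm_zx (smooth_py hΘ),
    comm_wx (smooth_py hΘ), comm_wz (smooth_py hΘ), comm_wy (smooth_py hΘ),
    comm_xy (smooth_pz hΘ), comm_wx (smooth_pz hΘ),
    comm_xy (smooth_pw hΘ), comm_zy (smooth_pw hΘ), comm_zx (smooth_pw hΘ)]
    at hx1 hy1 ⊢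
  norm_num at hx1 hy1 ⊢
  linear_combination (-(lam ^ 2) * py f w z x y) * hx1 + (lam ^ 2 * px f w z x y) * hy1
end

section
/- Let ψ(w,z,x,y) = 1/(wx+zy). Then ψ satisfies the curved wave equation on the Sparling–Tod background: ψ_{xw} + ψ_{yz} + 2σ(wx+zy)^{−3}(z²ψ_{xx} + w²ψ_{yy} − 2wz ψ_{xy}) = 0, for any constant σ, on the region where wx+zy ≠ 0. -/
theorem derivA (a b t : ℂ) (h : a*t+b ≠ 0) :
    deriv (fun s => 1/(a*s+b)) t = -a/(a*t+b)^2 := by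
  have h1 : HasDerivAt (fun s : ℂ => a*s+b) a t := by
    simpa using ((hasDerivAt_id t).const_mul a).add_const b
  have h3 : deriv (fun s : ℂ => (a*s+b)⁻¹) t = -a/(a*t+b)^2 := (h1.inv h).deriv
  simpa [one_div] using h3

theorem derivB (a b c d t : ℂ) (h : a*t+b ≠ 0) :
    deriv (fun s => (c*s+d)/(a*s+b)^2) t
      = (c*(a*t+b) - 2*a*(c*t+d))/(a*t+b)^3 := by
  have h1 : HasDerivAt (fun s : ℂ => c*s+d) c t := by
    simpa using ((hasDerivAt_id t).const_mul c).add_const d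
  have hl : HasDerivAt (fun s : ℂ => a*s+b) a t := by
    simpa using ((hasDerivAt_id t).const_mul a).add_const b
  have h2 : HasDerivAt (fun s : ℂ => (a*s+b)^2) (2*(a*t+b)*a) t := by
    simpa using hl.fun_pow 2
  have h3 : HasDerivAt (fun s : ℂ => (c*s+d)/(a*s+b)^2)
      ((c*(a*t+b) - 2*a*(c*t+d))/(a*t+b)^3) t := by
    refine (h1.div h2 (pow_ne_zero 2 h)).congr_deriv ?_
    field_simp
  exact h3.deriv

theorem second_partial (a b c d x : ℂ) (F : ℂ → ℂ)
    (hF : F =ᶠ[nhds x] fun t => (c*t+d)/(a*t+b)^2) (h : a*x+b ≠ 0) :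
    deriv F x = (c*(a*x+b) - 2*a*(c*x+d))/(a*x+b)^3 := by
  rw [hF.deriv_eq, derivB a b c d x h]


/-- ψ = 1/(wx+zy) satisfies the curved wave equation on the Sparling–Tod
background: ψ_{xw} + ψ_{yz} + 2σ(wx+zy)⁻³(z²ψ_{xx} + w²ψ_{yy} − 2wzψ_{xy}) = 0. -/
theorem curved_wave_sparlingTod (σ : ℂ) (w z x y : ℂ)
    (h : w * x + z * y ≠ 0) :
    let ψ : ℂ → ℂ → ℂ → ℂ → ℂ := fun w z x y => 1 / (w * x + z * y)
    px (pw ψ) w z x y + py (pz ψ) w z x y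
      + 2 * σ / (w * x + z * y) ^ 3 *
        (z ^ 2 * px (px ψ) w z x y + w ^ 2 * py (py ψ) w z x y
          - 2 * w * z * px (py ψ) w z x y) = 0 := by
  intro ψ
  have h' : z * y + w * x ≠ 0 := by
    intro h0; exact h (by linear_combination h0)
  have hx : ∀ᶠ t in nhds x, w * t + z * y ≠ 0 := by
    have hc : ContinuousAt (fun t : ℂ => w * t + z * y) x := by fun_prop
    exact hc.eventually_ne h
  have hy : ∀ᶠ t in nhds y, z * t + w * x ≠ 0 := by
    have hc : ContinuousAt (fun t : ℂ => z * t + w * x) y := by fun_prop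
    exact hc.eventually_ne h'
  -- case 1 : px (pw ψ)
  have c1 : px (pw ψ) w z x y
      = ((-1)*(w*x+z*y) - 2*w*((-1)*x+0))/(w*x+z*y)^3 := by
    have hg : (fun t => pw ψ w z t y) =ᶠ[nhds x]
        fun t => ((-1)*t+0)/(w*t+z*y)^2 := by
      filter_upwards [hx] with t ht
      show deriv (fun s => ψ s z t y) w = _
      have hf : (fun s => ψ s z t y) = fun s => 1/(t*s+z*y) := by
        funext s; show 1/(s*t+z*y) = _; ring_nf
      rw [hf, derivA t (z*y) w (by rw [mul_comm]; exact ht)]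
      rw [mul_comm t w]; ring
    exact second_partial w (z*y) (-1) 0 x _ hg h
  -- case 2 : py (pz ψ)
  have c2 : py (pz ψ) w z x y
      = ((-1)*(z*y+w*x) - 2*z*((-1)*y+0))/(z*y+w*x)^3 := by
    have hg : (fun t => pz ψ w z x t) =ᶠ[nhds y]
        fun t => ((-1)*t+0)/(z*t+w*x)^2 := by
      filter_upwards [hy] with t ht
      show deriv (fun s => ψ w s x t) z = _
      have hf : (fun s => ψ w s x t) = fun s => 1/(t*s+w*x) := by
        funext s; show 1/(w*x+s*t) = _; ring_nf
      rw [hf, derivA t (w*x) z (by rw [mul_comm]; exact ht)]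
      rw [mul_comm t z]; ring
    exact second_partial z (w*x) (-1) 0 y _ hg h'
  -- case 3 : px (px ψ)
  have c3 : px (px ψ) w z x y
      = (0*(w*x+z*y) - 2*w*(0*x+(-w)))/(w*x+z*y)^3 := by
    have hg : (fun t => px ψ w z t y) =ᶠ[nhds x]
        fun t => (0*t+(-w))/(w*t+z*y)^2 := by
      filter_upwards [hx] with t ht
      show deriv (fun s => ψ w z s y) t = _
      have hf : (fun s => ψ w z s y) = fun s => 1/(w*s+z*y) := rfl
      rw [hf, derivA w (z*y) t ht]
      ring
    exact second_partial w (z*y) 0 (-w) x _ hg h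
  -- case 4 : py (py ψ)
  have c4 : py (py ψ) w z x y
      = (0*(z*y+w*x) - 2*z*(0*y+(-z)))/(z*y+w*x)^3 := by
    have hg : (fun t => py ψ w z x t) =ᶠ[nhds y]
        fun t => (0*t+(-z))/(z*t+w*x)^2 := by
      filter_upwards [hy] with t ht
      show deriv (fun s => ψ w z x s) t = _
      have hf : (fun s => ψ w z x s) = fun s => 1/(z*s+w*x) := by
        funext s; show 1/(w*x+z*s) = _; ring_nf
      rw [hf, derivA z (w*x) t ht]
      ring
    exact second_partial z (w*x) 0 (-z) y _ hg h'
  -- case 5 : px (py ψ)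
  have c5 : px (py ψ) w z x y
      = (0*(w*x+z*y) - 2*w*(0*x+(-z)))/(w*x+z*y)^3 := by
    have hg : (fun t => py ψ w z t y) =ᶠ[nhds x]
        fun t => (0*t+(-z))/(w*t+z*y)^2 := by
      filter_upwards [hx] with t ht
      show deriv (fun s => ψ w z t s) y = _
      have hf : (fun s => ψ w z t s) = fun s => 1/(z*s+w*t) := by
        funext s; show 1/(w*t+z*s) = _; ring_nf
      have hzy : z*y+w*t ≠ 0 := by
        intro h0; exact ht (by linear_combination h0)
      rw [hf, derivA z (w*t) y hzy]
      rw [show z*y+w*t = w*t+z*y from by ring]; ring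
    exact second_partial w (z*y) 0 (-z) x _ hg h
  show deriv (fun t => pw ψ w z t y) x + deriv (fun t => pz ψ w z x t) y
      + 2 * σ / (w * x + z * y) ^ 3 *
        (z ^ 2 * deriv (fun t => px ψ w z t y) x
          + w ^ 2 * deriv (fun t => py ψ w z x t) y
          - 2 * w * z * deriv (fun t => py ψ w z t y) x) = 0
  rw [show deriv (fun t => pw ψ w z t y) x = px (pw ψ) w z x y from rfl, c1]
  rw [show deriv (fun t => pz ψ w z x t) y = py (pz ψ) w z x y from rfl, c2]
  rw [show deriv (fun t => px ψ w z t y) x = px (px ψ) w z x y from rfl, c3]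
  rw [show deriv (fun t => py ψ w z x t) y = py (py ψ) w z x y from rfl, c4]
  rw [show deriv (fun t => py ψ w z t y) x = px (py ψ) w z x y from rfl, c5]
  field_simp
  ring
end
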